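/- The variety of lattices has the finite embeddability property: for every lattice L and every finite subset S ⊆ L, there exist a finite lattice K and an injective map f : S → K such that for all a, b, c ∈ S one has a ⊔ b = c if and only if f a ⊔ f b = f c, and a ⊓ b = c if and only if f a ⊓ f b = f c. -/

import Mathlib

open Classical in
/-- A finite, inf-closed subset of a lattice possessing a top element is itself
a lattice (with the inherited order). -/
noncomputable def latticeOfFinset {L : Type} [Lattice L] (T : Finset L)
    (hinf : ∀ x ∈ T, ∀ y ∈ T, x ⊓ y ∈ T)
    (m : L) (hm : m ∈ T) (htop : ∀ x ∈ T, x ≤ m) :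
    Lattice {x // x ∈ T} :=
  { (inferInstance : PartialOrder {x // x ∈ T}) with
    inf := fun (x y : {x // x ∈ T}) => ⟨x.1 ⊓ y.1, hinf _ x.2 _ y.2⟩
    inf_le_left := fun (x y : {x // x ∈ T}) =>
      show x.1 ⊓ y.1 ≤ x.1 from inf_le_left
    inf_le_right := fun (x y : {x // x ∈ T}) =>
      show x.1 ⊓ y.1 ≤ y.1 from inf_le_right
    le_inf := fun (x y z : {x // x ∈ T}) h1 h2 =>
      show x.1 ≤ y.1 ⊓ z.1 from le_inf h1 h2
    sup := fun (x y : {x // x ∈ T}) =>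
      ⟨(T.filter fun z => x.1 ≤ z ∧ y.1 ≤ z).inf'
        ⟨m, Finset.mem_filter.2 ⟨hm, htop _ x.2, htop _ y.2⟩⟩ id,
      Finset.mem_coe.1 <| Finset.inf'_mem (↑T : Set L)
        (fun a ha b hb => hinf a ha b hb) _ _ _
        (fun i hi => (Finset.mem_filter.1 hi).1)⟩
    le_sup_left := fun (x y : {x // x ∈ T}) =>
      show x.1 ≤ (T.filter fun z => x.1 ≤ z ∧ y.1 ≤ z).inf'
          ⟨m, Finset.mem_filter.2 ⟨hm, htop _ x.2, htop _ y.2⟩⟩ id from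
        Finset.le_inf' _ _ fun b hb => (Finset.mem_filter.1 hb).2.1
    le_sup_right := fun (x y : {x // x ∈ T}) =>
      show y.1 ≤ (T.filter fun z => x.1 ≤ z ∧ y.1 ≤ z).inf'
          ⟨m, Finset.mem_filter.2 ⟨hm, htop _ x.2, htop _ y.2⟩⟩ id from
        Finset.le_inf' _ _ fun b hb => (Finset.mem_filter.1 hb).2.2
    sup_le := fun (x y z : {x // x ∈ T}) h1 h2 =>
      show (T.filter fun w => x.1 ≤ w ∧ y.1 ≤ w).inf'
          ⟨m, Finset.mem_filter.2 ⟨hm, htop _ x.2, htop _ y.2⟩⟩ id ≤ z.1 from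
        Finset.inf'_le _ (Finset.mem_filter.2 ⟨z.2, h1, h2⟩) }

/-- The variety of lattices has the finite embeddability property: every finite
relative partial sublattice of a lattice is a relative partial sublattice of a
finite lattice. -/
theorem lattice_fep (L : Type) [Lattice L] (S : Set L) (hS : S.Finite) :
    ∃ (K : Type) (_ : Lattice K) (_ : Fintype K) (f : S → K),
      Function.Injective f ∧
      ∀ a b c : S,
        (((a : L) ⊔ (b : L) = (c : L)) ↔ f a ⊔ f b = f c) ∧
        (((a : L) ⊓ (b : L) = (c : L)) ↔ f a ⊓ f b = f c) := by
  classical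
  rcases S.eq_empty_or_nonempty with hS0 | hS0
  · refine ⟨Bool, inferInstance, inferInstance, fun _ => true, ?_, ?_⟩
    · intro a b _
      exact absurd a.2 (by simp [hS0])
    · intro a
      exact absurd a.2 (by simp [hS0])
  · -- Build a finite subset `T` of `L` containing `S`, closed under `⊓`,
    -- containing all pairwise sups of elements of `S`, and with a top element.
    have hex : ∃ (T : Finset L) (m : L),
        (∀ a ∈ S, a ∈ T) ∧ (∀ x ∈ T, ∀ y ∈ T, x ⊓ y ∈ T) ∧
        (∀ a ∈ S, ∀ b ∈ S, a ⊔ b ∈ T) ∧ m ∈ T ∧ ∀ x ∈ T, x ≤ m := by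
      set s : Finset L := hS.toFinset with hsdef
      have hs : s.Nonempty := by
        rw [hsdef]
        exact hS.toFinset_nonempty.2 hS0
      set Sv0 : Finset L := s ∪ (s ×ˢ s).image (fun p => p.1 ⊔ p.2) with hSv0def
      have hSv0 : Sv0.Nonempty := hs.mono Finset.subset_union_left
      set m : L := Sv0.sup' hSv0 id with hmdef
      set Sv : Finset L := insert m Sv0 with hSvdef
      have hub : ∀ x ∈ Sv, x ≤ m := by
        intro x hx
        rcases Finset.mem_insert.1 hx with h | h
        · exact h.le
        · exact Finset.le_sup' id h
      set P : Finset (Finset L) := Sv.powerset.filter Finset.Nonempty with hPdef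
      set T : Finset L :=
        P.attach.image (fun F => F.1.inf' ((Finset.mem_filter.1 F.2).2) id) with hTdef
      have hmemT : ∀ (F : Finset L) (hne : F.Nonempty), F ⊆ Sv → F.inf' hne id ∈ T := by
        intro F hne hsub
        have hFP : F ∈ P := Finset.mem_filter.2 ⟨Finset.mem_powerset.2 hsub, hne⟩
        rw [hTdef]
        exact Finset.mem_image.2 ⟨⟨F, hFP⟩, Finset.mem_attach _ _, rfl⟩
      have hmemT' : ∀ x ∈ T, ∃ (F : Finset L) (hne : F.Nonempty),
          F ⊆ Sv ∧ F.inf' hne id = x := by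
        intro x hx
        rw [hTdef] at hx
        obtain ⟨F, -, hFx⟩ := Finset.mem_image.1 hx
        have h := Finset.mem_filter.1 F.2
        exact ⟨F.1, h.2, Finset.mem_powerset.1 h.1, hFx⟩
      have hsingle : ∀ x ∈ Sv, x ∈ T := by
        intro x hx
        have := hmemT {x} (Finset.singleton_nonempty x)
          (Finset.singleton_subset_iff.2 hx)
        simpa using this
      refine ⟨T, m, ?_, ?_, ?_, ?_, ?_⟩
      · intro a ha
        refine hsingle a ?_
        refine Finset.mem_insert_of_mem ?_
        exact Finset.mem_union_left _ (by rw [hsdef]; exact hS.mem_toFinset.2 ha)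
      · intro x hx y hy
        obtain ⟨F, hFne, hFsub, hFx⟩ := hmemT' x hx
        obtain ⟨G, hGne, hGsub, hGy⟩ := hmemT' y hy
        have hUne : (F ∪ G).Nonempty := hFne.mono Finset.subset_union_left
        have := hmemT (F ∪ G) hUne (Finset.union_subset hFsub hGsub)
        rwa [Finset.inf'_union hFne hGne, hFx, hGy] at this
      · intro a ha b hb
        refine hsingle (a ⊔ b) ?_
        refine Finset.mem_insert_of_mem ?_
        refine Finset.mem_union_right _ ?_
        refine Finset.mem_image.2 ⟨(a, b), ?_, rfl⟩
        rw [Finset.mem_product]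
        rw [hsdef]
        exact ⟨hS.mem_toFinset.2 ha, hS.mem_toFinset.2 hb⟩
      · exact hsingle m (Finset.mem_insert_self _ _)
      · intro x hx
        obtain ⟨F, hFne, hFsub, hFx⟩ := hmemT' x hx
        obtain ⟨i, hi⟩ := hFne
        calc x ≤ i := hFx ▸ Finset.inf'_le id hi
          _ ≤ m := hub i (hFsub hi)
    obtain ⟨T, m, hST, hinfT, hsupT, hmT, htopT⟩ := hex
    letI instK : Lattice {x // x ∈ T} := latticeOfFinset T hinfT m hmT htopT
    have keysup : ∀ (x y : {z // z ∈ T}) (h : x.1 ⊔ y.1 ∈ T),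
        x ⊔ y = ⟨x.1 ⊔ y.1, h⟩ := by
      intro x y h
      have h1 : x ≤ (⟨x.1 ⊔ y.1, h⟩ : {z // z ∈ T}) :=
        (le_sup_left : (x : L) ≤ x.1 ⊔ y.1)
      have h2 : y ≤ (⟨x.1 ⊔ y.1, h⟩ : {z // z ∈ T}) :=
        (le_sup_right : (y : L) ≤ x.1 ⊔ y.1)
      have hx : (x : L) ≤ ((x ⊔ y : {z // z ∈ T}) : L) := (le_sup_left : x ≤ x ⊔ y)
      have hy : (y : L) ≤ ((x ⊔ y : {z // z ∈ T}) : L) := (le_sup_right : y ≤ x ⊔ y)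
      have h3 : (⟨x.1 ⊔ y.1, h⟩ : {z // z ∈ T}) ≤ x ⊔ y :=
        (sup_le hx hy : (x.1 ⊔ y.1 : L) ≤ ((x ⊔ y : {z // z ∈ T}) : L))
      exact le_antisymm (sup_le h1 h2) h3
    have keyinf : ∀ (x y : {z // z ∈ T}) (h : x.1 ⊓ y.1 ∈ T),
        x ⊓ y = ⟨x.1 ⊓ y.1, h⟩ := by
      intro x y h
      have h1 : (⟨x.1 ⊓ y.1, h⟩ : {z // z ∈ T}) ≤ x :=
        (inf_le_left : (x.1 ⊓ y.1 : L) ≤ x.1)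
      have h2 : (⟨x.1 ⊓ y.1, h⟩ : {z // z ∈ T}) ≤ y :=
        (inf_le_right : (x.1 ⊓ y.1 : L) ≤ y.1)
      have hx : ((x ⊓ y : {z // z ∈ T}) : L) ≤ (x : L) := (inf_le_left : x ⊓ y ≤ x)
      have hy : ((x ⊓ y : {z // z ∈ T}) : L) ≤ (y : L) := (inf_le_right : x ⊓ y ≤ y)
      have h3 : x ⊓ y ≤ (⟨x.1 ⊓ y.1, h⟩ : {z // z ∈ T}) :=
        (le_inf hx hy : ((x ⊓ y : {z // z ∈ T}) : L) ≤ (x.1 ⊓ y.1 : L))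
      exact le_antisymm h3 (le_inf h1 h2)
    refine ⟨{x // x ∈ T}, instK, inferInstanceAs (Fintype {x // x ∈ T}),
      fun a => ⟨a.1, hST a.1 a.2⟩, ?_, ?_⟩
    · intro a b h
      have : (a : L) = (b : L) := congrArg (Subtype.val : {z // z ∈ T} → L) h
      exact Subtype.ext this
    · intro a b c
      constructor
      · rw [keysup ⟨a.1, hST a.1 a.2⟩ ⟨b.1, hST b.1 b.2⟩ (hsupT a.1 a.2 b.1 b.2)]
        constructor
        · intro h
          exact Subtype.ext h
        · intro h
          exact Subtype.mk_eq_mk.1 h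
      · rw [keyinf ⟨a.1, hST a.1 a.2⟩ ⟨b.1, hST b.1 b.2⟩
          (hinfT a.1 (hST a.1 a.2) b.1 (hST b.1 b.2))]
        constructor
        · intro h
          exact Subtype.ext h
        · intro h
          exact Subtype.mk_eq_mk.1 h
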